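/- Let p be a prime and s₁, s₂ real numbers with s₁ > 2 and s₂ > 2. Set X = p^{−s₁} and Y = p^{−s₂}. Then (1 − p⁻¹)⁻² times the integral over {(x,y,z) ∈ ℤ_p³ : ‖z‖ ≤ ‖y‖ ≤ ‖x‖} of ‖x‖^{s₂−2}·‖z‖^{s₁−1} with respect to μ³ equals (1 − p⁻¹) / ((1 − X)(1 − p⁻¹X)(1 − XY)). -/

import Mathlib

open MeasureTheory

section Aux

variable {p : ℕ} [Fact p.Prime]

lemma pball_measure [MeasurableSpace ℤ_[p]] [BorelSpace ℤ_[p]]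
    (μ : Measure ℤ_[p]) [μ.IsAddHaarMeasure] (hμ : μ Set.univ = 1) (n : ℕ) :
    μ {x : ℤ_[p] | ‖x‖ ≤ (p:ℝ) ^ (-(n:ℤ))} = ((p : ENNReal) ^ n)⁻¹ := by
  have hpne : p ≠ 0 := (Fact.out : p.Prime).ne_zero
  set B : Set ℤ_[p] := {x : ℤ_[p] | ‖x‖ ≤ (p:ℝ) ^ (-(n:ℤ))} with hB
  have hBmeas : MeasurableSet B :=
    (IsClosed.preimage continuous_norm isClosed_Iic).measurableSet
  set f := (PadicInt.toZModPow n : ℤ_[p] →+* ZMod (p ^ n)) with hf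
  have hker : ∀ x : ℤ_[p], f x = 0 ↔ x ∈ B := by
    intro x
    rw [← RingHom.mem_ker, PadicInt.ker_toZModPow]
    exact (PadicInt.norm_le_pow_iff_mem_span_pow x n).symm
  haveI : NeZero (p ^ n) := ⟨pow_ne_zero n hpne⟩
  have hcval : ∀ c : ZMod (p ^ n), f ((c.val : ℕ) : ℤ_[p]) = c := by
    intro c; rw [map_natCast]; exact ZMod.natCast_rightInverse c
  have hfiber : ∀ c : ZMod (p ^ n), f ⁻¹' {c} = (fun y => -((c.val : ℤ_[p])) + y) ⁻¹' B := by
    intro c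
    ext y
    simp only [Set.mem_preimage, Set.mem_singleton_iff, ← hker, map_add, map_neg, hcval]
    constructor
    · intro h; rw [h]; ring
    · intro h; linear_combination h
  have hfibermeas : ∀ c : ZMod (p ^ n), MeasurableSet (f ⁻¹' {c}) := by
    intro c; rw [hfiber c]
    exact hBmeas.preimage (measurable_const_add _)
  have hcover : ⋃ c : ZMod (p ^ n), f ⁻¹' {c} = Set.univ := by
    ext y; simp [Set.mem_iUnion]
  have hdisj : Pairwise (Function.onFun Disjoint (fun c : ZMod (p ^ n) => f ⁻¹' {c})) := by
    intro c c' hcc'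
    rw [Function.onFun, Set.disjoint_left]
    rintro y hy hy'
    exact hcc' (hy.symm.trans hy')
  have hsum : μ Set.univ = ∑' c : ZMod (p ^ n), μ (f ⁻¹' {c}) := by
    rw [← hcover, measure_iUnion hdisj hfibermeas]
  have hfib_eq : ∀ c : ZMod (p ^ n), μ (f ⁻¹' {c}) = μ B := by
    intro c; rw [hfiber c]; exact measure_preimage_add μ _ B
  rw [hμ, tsum_fintype] at hsum
  simp only [hfib_eq, Finset.sum_const, Finset.card_univ, ZMod.card, nsmul_eq_mul,
    Nat.cast_pow] at hsum
  have hp0 : ((p : ENNReal) ^ n) ≠ 0 := pow_ne_zero n (by exact_mod_cast hpne)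
  have hptop : ((p : ENNReal) ^ n) ≠ ⊤ := ENNReal.pow_ne_top (ENNReal.natCast_ne_top p)
  calc μ B = ((p : ENNReal) ^ n)⁻¹ * ((p : ENNReal) ^ n * μ B) := by
        rw [← mul_assoc, ENNReal.inv_mul_cancel hp0 hptop, one_mul]
    _ = ((p : ENNReal) ^ n)⁻¹ := by rw [← hsum, mul_one]

lemma psphere_eq_diff (n : ℕ) :
    {x : ℤ_[p] | ‖x‖ = (p:ℝ) ^ (-(n:ℤ))} =
      {x : ℤ_[p] | ‖x‖ ≤ (p:ℝ) ^ (-(n:ℤ))} \ {x : ℤ_[p] | ‖x‖ ≤ (p:ℝ) ^ (-((n+1:ℕ):ℤ))} := by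
  have hp1 : (1:ℝ) < p := by exact_mod_cast (Fact.out : p.Prime).one_lt
  ext x
  simp only [Set.mem_setOf_eq, Set.mem_diff, Set.mem_setOf_eq]
  constructor
  · intro h
    refine ⟨le_of_eq h, fun hle => ?_⟩
    have : (p:ℝ) ^ (-((n+1:ℕ):ℤ)) < (p:ℝ) ^ (-(n:ℤ)) := by
      apply zpow_lt_zpow_right₀ hp1; push_cast; omega
    rw [h] at hle; linarith
  · rintro ⟨hle, hnot⟩
    have h2 : ¬ (‖x‖ < (p:ℝ) ^ (-(n:ℤ))) := by
      intro hlt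
      apply hnot
      rw [PadicInt.norm_le_pow_iff_norm_lt_pow_add_one]
      convert hlt using 2
      push_cast; ring
    exact hle.lt_or_eq.resolve_left h2

lemma psphere_measure [MeasurableSpace ℤ_[p]] [BorelSpace ℤ_[p]]
    (μ : Measure ℤ_[p]) [μ.IsAddHaarMeasure] (hμ : μ Set.univ = 1) (n : ℕ) :
    (μ {x : ℤ_[p] | ‖x‖ = (p:ℝ) ^ (-(n:ℤ))}).toReal
      = (1 - (p:ℝ)⁻¹) * (p:ℝ) ^ (-(n:ℤ)) := by
  have hp0 : (0:ℝ) < p := by exact_mod_cast (Fact.out : p.Prime).pos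
  have hpe0 : (p:ℝ) ≠ 0 := ne_of_gt hp0
  have hpE : (p : ENNReal) ≠ 0 := by exact_mod_cast hpe0 ∘ (by exact_mod_cast ·)
  have hp1 : (1:ℝ) < p := by exact_mod_cast (Fact.out : p.Prime).one_lt
  have hmono : {x : ℤ_[p] | ‖x‖ ≤ (p:ℝ) ^ (-((n+1:ℕ):ℤ))} ⊆
      {x : ℤ_[p] | ‖x‖ ≤ (p:ℝ) ^ (-(n:ℤ))} := by
    intro x hx
    refine le_trans hx (zpow_le_zpow_right₀ (le_of_lt hp1) ?_)
    push_cast; omega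
  have hm2 : MeasurableSet {x : ℤ_[p] | ‖x‖ ≤ (p:ℝ) ^ (-((n+1:ℕ):ℤ))} :=
    (IsClosed.preimage continuous_norm isClosed_Iic).measurableSet
  have hne : ∀ k : ℕ, ((p:ENNReal) ^ k) ≠ 0 := fun k => pow_ne_zero k hpE
  have hfin : μ {x : ℤ_[p] | ‖x‖ ≤ (p:ℝ) ^ (-((n+1:ℕ):ℤ))} ≠ ⊤ := by
    rw [pball_measure μ hμ]; exact ENNReal.inv_ne_top.mpr (hne _)
  rw [psphere_eq_diff, measure_diff hmono hm2.nullMeasurableSet hfin,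
    pball_measure μ hμ, pball_measure μ hμ,
    ENNReal.toReal_sub_of_le ?hle ?hfin2]
  case hle =>
    exact ENNReal.inv_le_inv.mpr (pow_le_pow_right₀ (by exact_mod_cast hp1.le) (by omega))
  case hfin2 => exact ENNReal.inv_ne_top.mpr (hne _)
  rw [ENNReal.toReal_inv, ENNReal.toReal_inv, ENNReal.toReal_pow, ENNReal.toReal_pow,
    ENNReal.toReal_natCast, zpow_neg, zpow_natCast]
  have h1 : ((p:ℝ) ^ n) ≠ 0 := by positivity
  field_simp
  ring

end Aux

lemma collect_aux (Q : ℝ) (hQ : 0 < Q) (c x y z u v x' y' z' : ℝ)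
    (h : x + y + z + u + v = x' + y' + z') :
    c * Q ^ x * (c * Q ^ y * (c * Q ^ z)) * (Q ^ u * Q ^ v)
      = c * Q ^ x' * (c * Q ^ y' * (c * Q ^ z')) := by
  have hm : ∀ a b : ℝ, Q ^ a * Q ^ b = Q ^ (a + b) := fun a b => (Real.rpow_add hQ a b).symm
  calc c * Q ^ x * (c * Q ^ y * (c * Q ^ z)) * (Q ^ u * Q ^ v)
      = c ^ 3 * (Q ^ x * (Q ^ y * (Q ^ z * (Q ^ u * Q ^ v)))) := by ring
    _ = c ^ 3 * Q ^ (x + (y + (z + (u + v)))) := by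
        rw [hm u v, hm z (u + v), hm y (z + (u + v)), hm x (y + (z + (u + v)))]
    _ = c ^ 3 * Q ^ (x' + (y' + z')) := by
        rw [show x + (y + (z + (u + v))) = x' + (y' + z') by linarith]
    _ = c ^ 3 * (Q ^ x' * (Q ^ y' * Q ^ z')) := by rw [hm y' z', hm x' (y' + z')]
    _ = c * Q ^ x' * (c * Q ^ y' * (c * Q ^ z')) := by ring

set_option maxHeartbeats 1000000 in
theorem stmt4 (p : ℕ) [Fact p.Prime]
    [MeasurableSpace ℤ_[p]] [BorelSpace ℤ_[p]]
    (μ : Measure ℤ_[p]) [μ.IsAddHaarMeasure] (hμ : μ Set.univ = 1)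
    (s₁ s₂ : ℝ) (hs₁ : 2 < s₁) (hs₂ : 2 < s₂)
    (X Y : ℝ) (hX : X = (p : ℝ) ^ (-s₁)) (hY : Y = (p : ℝ) ^ (-s₂)) :
    ((1 - (p : ℝ)⁻¹) ^ 2)⁻¹ *
      ∫ w in {w : ℤ_[p] × ℤ_[p] × ℤ_[p] | ‖w.2.2‖ ≤ ‖w.2.1‖ ∧ ‖w.2.1‖ ≤ ‖w.1‖},
        ‖w.1‖ ^ (s₂ - 2) * ‖w.2.2‖ ^ (s₁ - 1) ∂(μ.prod (μ.prod μ)) =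
      (1 - (p : ℝ)⁻¹) / ((1 - X) * (1 - (p : ℝ)⁻¹ * X) * (1 - X * Y)) := by
  haveI : IsProbabilityMeasure μ := ⟨hμ⟩
  have hp1 : (1:ℝ) < p := by exact_mod_cast (Fact.out : p.Prime).one_lt
  have hp0 : (0:ℝ) < p := by linarith
  set P : ℝ := (p : ℝ) with hP
  set t : ℝ := P⁻¹ with ht
  have ht1 : t < 1 := by rw [ht]; exact inv_lt_one_of_one_lt₀ hp1
  have ht0 : 0 < t := by rw [ht]; positivity
  set ν := μ.prod (μ.prod μ) with hν
  set F : ℤ_[p] × ℤ_[p] × ℤ_[p] → ℝ :=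
    fun w => ‖w.1‖ ^ (s₂ - 2) * ‖w.2.2‖ ^ (s₁ - 1) with hF
  set S : ℕ → Set ℤ_[p] := fun n => {x : ℤ_[p] | ‖x‖ = P ^ (-(n:ℤ))} with hS
  set R : Set (ℤ_[p] × ℤ_[p] × ℤ_[p]) :=
    {w | ‖w.2.2‖ ≤ ‖w.2.1‖ ∧ ‖w.2.1‖ ≤ ‖w.1‖} with hR
  set T : ℕ × ℕ × ℕ → Set (ℤ_[p] × ℤ_[p] × ℤ_[p]) :=
    fun n => S n.1 ×ˢ (S (n.1 + n.2.1) ×ˢ S (n.1 + n.2.1 + n.2.2)) with hT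
  -- basic measurability
  have hSmeas : ∀ n, MeasurableSet (S n) :=
    fun n => (continuous_norm.measurable (measurableSet_singleton _) : _)
  have hTmeas : ∀ n, MeasurableSet (T n) :=
    fun n => (hSmeas _).prod ((hSmeas _).prod (hSmeas _))
  have hRmeas : MeasurableSet R := by
    have h1 : IsClosed {w : ℤ_[p] × ℤ_[p] × ℤ_[p] | ‖w.2.2‖ ≤ ‖w.2.1‖} :=
      isClosed_le continuous_snd.snd.norm continuous_snd.fst.norm
    have h2 : IsClosed {w : ℤ_[p] × ℤ_[p] × ℤ_[p] | ‖w.2.1‖ ≤ ‖w.1‖} :=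
      isClosed_le continuous_snd.fst.norm continuous_fst.norm
    have : R = {w : ℤ_[p] × ℤ_[p] × ℤ_[p] | ‖w.2.2‖ ≤ ‖w.2.1‖} ∩
        {w : ℤ_[p] × ℤ_[p] × ℤ_[p] | ‖w.2.1‖ ≤ ‖w.1‖} := rfl
    rw [this]
    exact (h1.inter h2).measurableSet
  have hFC : Continuous F := by
    apply Continuous.mul
    · exact (continuous_fst.norm).rpow_const (fun x => Or.inr (by linarith))
    · exact (continuous_snd.snd.norm).rpow_const (fun x => Or.inr (by linarith))
  have hFi : Integrable F ν := by
    rw [← integrableOn_univ]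
    exact hFC.continuousOn.integrableOn_compact isCompact_univ
  -- norm facts
  have hzle : ∀ u v : ℕ, u ≤ v → P ^ (-(v:ℤ)) ≤ P ^ (-(u:ℤ)) :=
    fun u v h => zpow_le_zpow_right₀ hp1.le (by omega)
  have hinj : ∀ u v : ℕ, P ^ (-(u:ℤ)) = P ^ (-(v:ℤ)) → u = v := by
    intro u v h
    have h1 := (zpow_le_zpow_iff_right₀ hp1).mp h.le
    have h2 := (zpow_le_zpow_iff_right₀ hp1).mp h.ge
    omega
  -- T n ⊆ R
  have hsub : (⋃ n, T n) ⊆ R := by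
    rintro w hw
    obtain ⟨⟨a, i, j⟩, hmem⟩ := Set.mem_iUnion.mp hw
    obtain ⟨h1, h2, h3⟩ := hmem
    refine ⟨?_, ?_⟩
    · rw [Set.mem_setOf_eq] at h2 h3
      rw [h3, h2]; exact hzle _ _ (by omega)
    · rw [Set.mem_setOf_eq] at h1 h2
      rw [h2, h1]; exact hzle _ _ (by omega)
  -- F vanishes on R \ ⋃ T
  have hzero : ∀ w ∈ R, w ∉ (⋃ n, T n) → F w = 0 := by
    intro w hwR hw
    by_cases hz : w.2.2 = 0
    · simp only [hF, hz, norm_zero]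
      rw [Real.zero_rpow (by linarith : s₁ - 1 ≠ 0), mul_zero]
    · exfalso
      apply hw
      have hznorm : 0 < ‖w.2.2‖ := norm_pos_iff.mpr hz
      have hy : w.2.1 ≠ 0 := norm_pos_iff.mp (lt_of_lt_of_le hznorm hwR.1)
      have hx : w.1 ≠ 0 := norm_pos_iff.mp
        (lt_of_lt_of_le hznorm (le_trans hwR.1 hwR.2))
      set a := w.1.valuation with ha
      set b := w.2.1.valuation with hb
      set c := w.2.2.valuation with hc
      have hva : ((a:ℤ)) = w.1.valuation := rfl
      have hvb : ((b:ℤ)) = w.2.1.valuation := rfl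
      have hvc : ((c:ℤ)) = w.2.2.valuation := rfl
      have hna : ‖w.1‖ = P ^ (-(a:ℤ)) := by
        rw [PadicInt.norm_eq_zpow_neg_valuation hx, hva]
      have hnb : ‖w.2.1‖ = P ^ (-(b:ℤ)) := by
        rw [PadicInt.norm_eq_zpow_neg_valuation hy, hvb]
      have hnc : ‖w.2.2‖ = P ^ (-(c:ℤ)) := by
        rw [PadicInt.norm_eq_zpow_neg_valuation hz, hvc]
      have hab : a ≤ b := by
        have := hwR.2; rw [hna, hnb] at this
        have := (zpow_le_zpow_iff_right₀ hp1).mp this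
        omega
      have hbc : b ≤ c := by
        have := hwR.1; rw [hnb, hnc] at this
        have := (zpow_le_zpow_iff_right₀ hp1).mp this
        omega
      refine Set.mem_iUnion.mpr ⟨⟨a, b - a, c - b⟩, ?_, ?_, ?_⟩
      · exact hna
      · show w.2.1 ∈ S (a + (b - a))
        rw [Nat.add_sub_cancel' hab]; exact hnb
      · show w.2.2 ∈ S (a + (b - a) + (c - b))
        rw [Nat.add_sub_cancel' hab, Nat.add_sub_cancel' hbc]; exact hnc
  -- replace region by union
  have hind : ∫ w in R, F w ∂ν = ∫ w in (⋃ n, T n), F w ∂ν := by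
    rw [← integral_indicator hRmeas, ← integral_indicator (MeasurableSet.iUnion hTmeas)]
    congr 1
    funext w
    by_cases hw : w ∈ ⋃ n, T n
    · rw [Set.indicator_of_mem hw, Set.indicator_of_mem (hsub hw)]
    · rw [Set.indicator_of_notMem hw]
      by_cases hwR : w ∈ R
      · rw [Set.indicator_of_mem hwR]; exact hzero w hwR hw
      · rw [Set.indicator_of_notMem hwR]
  -- disjointness
  have hdisj : Pairwise (Function.onFun Disjoint T) := by
    rintro ⟨a, i, j⟩ ⟨a', i', j'⟩ hnm
    rw [Function.onFun, Set.disjoint_left]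
    rintro w ⟨h1, h2, h3⟩ ⟨h1', h2', h3'⟩
    rw [Set.mem_setOf_eq] at h1 h2 h3 h1' h2' h3'
    apply hnm
    have e1 : a = a' := hinj _ _ (h1.symm.trans h1')
    have e2 : a + i = a' + i' := hinj _ _ (h2.symm.trans h2')
    have e3 : a + i + j = a' + i' + j' := hinj _ _ (h3.symm.trans h3')
    simp only [Prod.mk.injEq]
    omega
  have hiU : ∫ w in (⋃ n, T n), F w ∂ν = ∑' n, ∫ w in T n, F w ∂ν :=
    integral_iUnion hTmeas hdisj hFi.integrableOn
  -- value of each piece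
  have hrpowP : ∀ u : ℕ, P ^ (-(u:ℤ)) = P ^ (-(u:ℝ)) := by
    intro u
    rw [← Real.rpow_intCast P (-(u:ℤ))]
    norm_num
  have hmulP : ∀ x y : ℝ, P ^ x * P ^ y = P ^ (x + y) := fun x y =>
    (Real.rpow_add hp0 x y).symm
  have hnatP : ∀ (r : ℝ) (k : ℕ), (P ^ r) ^ k = P ^ (r * k) := by
    intro r k
    rw [← Real.rpow_natCast (P ^ r) k, ← Real.rpow_mul hp0.le]
  have hterm : ∀ n : ℕ × ℕ × ℕ, ∫ w in T n, F w ∂ν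
      = ((1 - t) * (X * Y) ^ n.1) * (((1 - t) * (t * X) ^ n.2.1) * ((1 - t) * X ^ n.2.2)) := by
    rintro ⟨a, i, j⟩
    dsimp only
    have hconst : Set.EqOn F
        (fun _ => (P ^ (-(a:ℤ))) ^ (s₂ - 2) * (P ^ (-((a+i+j:ℕ):ℤ))) ^ (s₁ - 1))
        (T (a, i, j)) := by
      rintro w ⟨h1, _, h3⟩
      rw [Set.mem_setOf_eq] at h1 h3
      simp only [hF]
      rw [h1, h3]
    rw [setIntegral_congr_fun (hTmeas _) hconst, setIntegral_const]
    have hmeas : (ν (T (a, i, j))).toReal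
        = ((μ (S a)).toReal * ((μ (S (a+i))).toReal * (μ (S (a+i+j))).toReal)) := by
      rw [hν, hT]
      simp only
      rw [Measure.prod_prod, Measure.prod_prod, ENNReal.toReal_mul, ENNReal.toReal_mul]
    rw [measureReal_def, hmeas, psphere_measure μ hμ, psphere_measure μ hμ, psphere_measure μ hμ]
    rw [smul_eq_mul, ← hP]
    -- now pure real computation
    rw [hX, hY, ← ht]
    rw [hrpowP a, hrpowP (a+i), hrpowP (a+i+j)]
    rw [← Real.rpow_mul hp0.le, ← Real.rpow_mul hp0.le]
    rw [show t = P ^ (-1:ℝ) by rw [ht, Real.rpow_neg_one]]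
    rw [hmulP (-s₁) (-s₂), hmulP (-1) (-s₁)]
    rw [hnatP (-s₁ + -s₂) a, hnatP (-1 + -s₁) i, hnatP (-s₁) j]
    apply collect_aux P hp0
    push_cast
    ring
  -- positivity facts
  have hX0 : 0 < X := by rw [hX]; exact Real.rpow_pos_of_pos hp0 _
  have hX1 : X < 1 := by rw [hX]; exact Real.rpow_lt_one_of_one_lt_of_neg hp1 (by linarith)
  have hY0 : 0 < Y := by rw [hY]; exact Real.rpow_pos_of_pos hp0 _
  have hY1 : Y < 1 := by rw [hY]; exact Real.rpow_lt_one_of_one_lt_of_neg hp1 (by linarith)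
  have hA0 : (0:ℝ) ≤ X * Y := by positivity
  have hA1 : X * Y < 1 := by nlinarith
  have hB0 : (0:ℝ) ≤ t * X := by positivity
  have hB1 : t * X < 1 := by nlinarith
  have h1t : (0:ℝ) ≤ 1 - t := by linarith
  -- summability
  have sA : Summable (fun k : ℕ => (1 - t) * (X * Y) ^ k) :=
    (summable_geometric_of_lt_one hA0 hA1).mul_left _
  have sB : Summable (fun k : ℕ => (1 - t) * (t * X) ^ k) :=
    (summable_geometric_of_lt_one hB0 hB1).mul_left _
  have sC : Summable (fun k : ℕ => (1 - t) * X ^ k) :=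
    (summable_geometric_of_lt_one hX0.le hX1).mul_left _
  have sBC : Summable (fun m : ℕ × ℕ => ((1 - t) * (t * X) ^ m.1) * ((1 - t) * X ^ m.2)) :=
    sB.mul_of_nonneg sC (fun i => by positivity) (fun j => by positivity)
  have sfull : Summable (fun n : ℕ × ℕ × ℕ =>
      ((1 - t) * (X * Y) ^ n.1) * (((1 - t) * (t * X) ^ n.2.1) * ((1 - t) * X ^ n.2.2))) :=
    sA.mul_of_nonneg sBC (fun a => by positivity) (fun m => by positivity)
  -- tsum computation
  have h2 : ∑' (m : ℕ × ℕ), (((1 - t) * (t * X) ^ m.1) * ((1 - t) * X ^ m.2))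
      = ((1 - t) * (1 - t * X)⁻¹) * ((1 - t) * (1 - X)⁻¹) := by
    rw [Summable.tsum_prod' sBC (fun b => by dsimp only; exact sC.mul_left _)]
    have hin : ∀ i : ℕ, ∑' j : ℕ, (((1 - t) * (t * X) ^ i) * ((1 - t) * X ^ j))
        = ((1 - t) * (t * X) ^ i) * ((1 - t) * (1 - X)⁻¹) := by
      intro i
      rw [tsum_mul_left, tsum_mul_left, tsum_geometric_of_lt_one hX0.le hX1]
    rw [tsum_congr hin, tsum_mul_right, tsum_mul_left,
      tsum_geometric_of_lt_one hB0 hB1]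
  have htsum : ∑' n : ℕ × ℕ × ℕ,
      (((1 - t) * (X * Y) ^ n.1) * (((1 - t) * (t * X) ^ n.2.1) * ((1 - t) * X ^ n.2.2)))
      = ((1 - t) * (1 - X * Y)⁻¹) * (((1 - t) * (1 - t * X)⁻¹) * ((1 - t) * (1 - X)⁻¹)) := by
    rw [Summable.tsum_prod' sfull (fun b => by dsimp only; exact sBC.mul_left _)]
    have hin : ∀ a : ℕ, ∑' m : ℕ × ℕ,
        (((1 - t) * (X * Y) ^ a) * (((1 - t) * (t * X) ^ m.1) * ((1 - t) * X ^ m.2)))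
        = ((1 - t) * (X * Y) ^ a) * (((1 - t) * (1 - t * X)⁻¹) * ((1 - t) * (1 - X)⁻¹)) := by
      intro a
      rw [tsum_mul_left, h2]
    rw [tsum_congr hin, tsum_mul_right, tsum_mul_left,
      tsum_geometric_of_lt_one hA0 hA1]
  -- put it together
  rw [hind, hiU, tsum_congr hterm, htsum]
  have d1 : (1:ℝ) - t ≠ 0 := by linarith
  have d2 : (1:ℝ) - X ≠ 0 := by linarith
  have d3 : (1:ℝ) - t * X ≠ 0 := by linarith
  have d4 : (1:ℝ) - X * Y ≠ 0 := by linarith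
  field_simp
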